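/- Let J^{(3)} : ℤ → ℚ denote the third order Jacobsthal sequence extended to all integers, and for a positive integer r let ε_r = 2 if r ≡ 0 (mod 3) and ε_r = −1 otherwise. Then for all integers r, s, n with r ≥ 1, 0 ≤ s < r and n ≥ 3, J^{(3)}_{rn+s} = (2^r + ε_r)·J^{(3)}_{r(n−1)+s} − (2^r·ε_r + 1)·J^{(3)}_{r(n−2)+s} + 2^r·J^{(3)}_{r(n−3)+s}. -/

import Mathlib

/-- Third order Jacobsthal numbers on natural indices:
`J₀ = 0, J₁ = J₂ = 1`, `J_{n+3} = J_{n+2} + J_{n+1} + 2 J_n`. -/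
def J3fwd : ℕ → ℚ
  | 0 => 0
  | 1 => 1
  | 2 => 1
  | n + 3 => J3fwd (n + 2) + J3fwd (n + 1) + 2 * J3fwd n

/-- The backward extension: `J3bwd n = J^{(3)}_{-n}`, obtained from
`J_n = (J_{n+3} − J_{n+2} − J_{n+1}) / 2`. -/
def J3bwd : ℕ → ℚ
  | 0 => 0
  | 1 => 0
  | 2 => 1 / 2
  | n + 3 => (J3bwd n - J3bwd (n + 1) - J3bwd (n + 2)) / 2

/-- Third order Jacobsthal sequence extended to all integers. -/
def J3 : ℤ → ℚ
  | Int.ofNat n => J3fwd n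
  | Int.negSucc n => J3bwd (n + 1)

/-- `ε_r = ω₁^r + ω₂^r = 2` if `3 ∣ r` and `−1` otherwise. -/
noncomputable def eps (r : ℤ) : ℚ := if (3 : ℤ) ∣ r then 2 else -1

def dd (m : ℤ) : ℚ := if m % 3 = 0 then -2 else if m % 3 = 1 then 3 else -1

lemma dd_congr {a b : ℤ} (h : a % 3 = b % 3) : dd a = dd b := by
  unfold dd; rw [h]

lemma dd_sum (m : ℤ) : dd m + dd (m + 1) + dd (m + 2) = 0 := by
  have h : m % 3 = 0 ∨ m % 3 = 1 ∨ m % 3 = 2 := by omega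
  unfold dd
  rcases h with h | h | h
  · rw [h, show (m+1) % 3 = 1 by omega, show (m+2) % 3 = 2 by omega]; norm_num
  · rw [h, show (m+1) % 3 = 2 by omega, show (m+2) % 3 = 0 by omega]; norm_num
  · rw [h, show (m+1) % 3 = 0 by omega, show (m+2) % 3 = 1 by omega]; norm_num

lemma J3fwd_closed : ∀ k : ℕ, J3fwd k = ((2:ℚ)^(k+1) + dd k) / 7
  | 0 => by norm_num [J3fwd, dd]
  | 1 => by norm_num [J3fwd, dd]
  | 2 => by norm_num [J3fwd, dd]
  | (n+3) => by
      have h0 := J3fwd_closed n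
      have h1 := J3fwd_closed (n+1)
      have h2 := J3fwd_closed (n+2)
      show J3fwd (n+2) + J3fwd (n+1) + 2 * J3fwd n = _
      rw [h0, h1, h2]
      have hd : dd ((n:ℤ)+3) = dd (n:ℤ) := dd_congr (by omega)
      have hsum := dd_sum (n:ℤ)
      push_cast
      rw [hd]
      linear_combination hsum / 7

lemma J3bwd_closed : ∀ k : ℕ, J3bwd k = ((2:ℚ)^(1-(k:ℤ)) + dd (-(k:ℤ))) / 7
  | 0 => by norm_num [J3bwd, dd]
  | 1 => by norm_num [J3bwd, dd]
  | 2 => by norm_num [J3bwd, dd]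
  | (n+3) => by
      have h0 := J3bwd_closed n
      have h1 := J3bwd_closed (n+1)
      have h2 := J3bwd_closed (n+2)
      show (J3bwd n - J3bwd (n+1) - J3bwd (n+2)) / 2 = _
      rw [h0, h1, h2]
      set a := (n:ℤ) with ha
      have c1 : dd (-((n:ℤ)+1)) = dd (-a-1) := dd_congr (by omega)
      have c2 : dd (-((n:ℤ)+2)) = dd (-a-2) := dd_congr (by omega)
      have c3 : dd (-((n:ℤ)+3)) = dd (-a) := dd_congr (by omega)
      have hsum : dd (-a-2) + dd (-a-1) + dd (-a) = 0 := by
        have := dd_sum (-a-2)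
        rw [show -a-2+1 = -a-1 by ring, show -a-2+2 = -a by ring] at this
        exact this
      have p1 : (2:ℚ)^(1-((n:ℤ)+1)) = (2:ℚ)^(1-a) / 2 := by
        rw [show 1-((n:ℤ)+1) = (1-a) + (-1) by push_cast [ha]; ring,
          zpow_add₀ (two_ne_zero), zpow_neg, zpow_one]; ring
      have p2 : (2:ℚ)^(1-((n:ℤ)+2)) = (2:ℚ)^(1-a) / 4 := by
        rw [show 1-((n:ℤ)+2) = (1-a) + (-2) by push_cast [ha]; ring,
          zpow_add₀ (two_ne_zero), zpow_neg]; norm_num; ring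
      have p3 : (2:ℚ)^(1-((n:ℤ)+3)) = (2:ℚ)^(1-a) / 8 := by
        rw [show 1-((n:ℤ)+3) = (1-a) + (-3) by push_cast [ha]; ring,
          zpow_add₀ (two_ne_zero), zpow_neg]; norm_num; ring
      push_cast
      rw [p1, p2, p3, c1, c2, c3]
      linear_combination -hsum / 14

lemma J3_closed (m : ℤ) : J3 m = ((2:ℚ)^(m+1) + dd m) / 7 := by
  cases m with
  | ofNat k =>
      show J3fwd k = _
      rw [J3fwd_closed k]
      congr 1
  | negSucc k =>
      show J3bwd (k+1) = _
      rw [J3bwd_closed (k+1)]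
      have e1 : 1 - ((k+1:ℕ) : ℤ) = Int.negSucc k + 1 := by
        rw [Int.negSucc_eq]; push_cast; ring
      have e2 : -((k+1:ℕ) : ℤ) = Int.negSucc k := by
        rw [Int.negSucc_eq]; push_cast; ring
      rw [e1, e2]

theorem third_order_jacobsthal_subsequence_recurrence
    (r s n : ℤ) (hr : 1 ≤ r) (hs0 : 0 ≤ s) (hsr : s < r) (hn : 3 ≤ n) :
    J3 (r * n + s) =
      ((2 : ℚ) ^ r + eps r) * J3 (r * (n - 1) + s)
        - ((2 : ℚ) ^ r * eps r + 1) * J3 (r * (n - 2) + s)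
        + (2 : ℚ) ^ r * J3 (r * (n - 3) + s) := by
  have e1 : r * (n - 2) + s = (r * (n - 3) + s) + r := by ring
  have e2 : r * (n - 1) + s = (r * (n - 3) + s) + 2 * r := by ring
  have e3 : r * n + s = (r * (n - 3) + s) + 3 * r := by ring
  rw [e1, e2, e3]
  set m := r * (n - 3) + s with hm
  rw [J3_closed, J3_closed, J3_closed, J3_closed]
  have hdd3 : dd (m + 3 * r) = dd m := dd_congr (by omega)
  have p1 : (2:ℚ)^(m + r + 1) = 2^(m+1) * 2^r := by
    rw [show m + r + 1 = (m+1) + r by ring, zpow_add₀ (two_ne_zero : (2:ℚ) ≠ 0)]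
  have p2 : (2:ℚ)^(m + 2*r + 1) = 2^(m+1) * 2^r * 2^r := by
    rw [show m + 2*r + 1 = ((m+1) + r) + r by ring,
      zpow_add₀ (two_ne_zero : (2:ℚ) ≠ 0), zpow_add₀ (two_ne_zero : (2:ℚ) ≠ 0)]
  have p3 : (2:ℚ)^(m + 3*r + 1) = 2^(m+1) * 2^r * 2^r * 2^r := by
    rw [show m + 3*r + 1 = (((m+1) + r) + r) + r by ring,
      zpow_add₀ (two_ne_zero : (2:ℚ) ≠ 0), zpow_add₀ (two_ne_zero : (2:ℚ) ≠ 0),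
      zpow_add₀ (two_ne_zero : (2:ℚ) ≠ 0)]
  rw [p1, p2, p3, hdd3]
  by_cases h : (3:ℤ) ∣ r
  · have hε : eps r = 2 := if_pos h
    have h1 : dd (m + r) = dd m := dd_congr (by omega)
    have h2 : dd (m + 2*r) = dd m := dd_congr (by omega)
    rw [hε, h1, h2]; ring
  · have hε : eps r = -1 := if_neg h
    have hr3 : r % 3 = 1 ∨ r % 3 = 2 := by omega
    have hsum : dd m + dd (m + r) + dd (m + 2*r) = 0 := by
      rcases hr3 with h' | h'
      · have a1 : dd (m + r) = dd (m + 1) := dd_congr (by omega)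
        have a2 : dd (m + 2*r) = dd (m + 2) := dd_congr (by omega)
        rw [a1, a2]; exact dd_sum m
      · have a1 : dd (m + r) = dd (m + 2) := dd_congr (by omega)
        have a2 : dd (m + 2*r) = dd (m + 1) := dd_congr (by omega)
        rw [a1, a2]; linarith [dd_sum m]
    rw [hε]
    linear_combination ((1 - (2:ℚ)^r) / 7) * hsum
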